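/- For the theta scheme applied to the isomerization test problem with |A| < 1, the limiting variance v∞ satisfies v∞ = A(λτ)·Var[X*] where A(λτ) = 2/(2 + λ(2θ-1)τ), Var[X*] = c1 c2 x_T/λ², λ = c1 + c2. In particular θ < 1/2 implies v∞ > Var[X*] (underdamped) and θ > 1/2 implies v∞ < Var[X*] (overdamped). -/

import Mathlib

set_option maxHeartbeats 1000000


theorem stmt_15 (c1 c2 xT tau theta : ℝ) (hc1 : 0 < c1) (hc2 : 0 < c2)
    (hxT : 0 < xT) (htau : 0 < tau) (htheta : theta ∈ Set.Icc (0 : ℝ) 1)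
    (hstab : (c1 + c2) * tau * (1 - 2 * theta) < 2)
    (m v : ℕ → ℝ) (vinf : ℝ)
    (hm : ∀ n, m (n + 1) =
      (1 - (c1 + c2) * (1 - theta) * tau) / (1 + (c1 + c2) * theta * tau) * m n +
        c2 * xT * tau / (1 + (c1 + c2) * theta * tau))
    (hv : ∀ n, v (n + 1) =
      ((1 - (c1 + c2) * (1 - theta) * tau) / (1 + (c1 + c2) * theta * tau)) ^ 2 * v n +
        (c1 - c2) * tau / (1 + (c1 + c2) * theta * tau) ^ 2 * m n +
        c2 * xT * tau / (1 + (c1 + c2) * theta * tau) ^ 2)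
    (hlim : Filter.Tendsto v Filter.atTop (nhds vinf)) :
    vinf = 2 / (2 + (c1 + c2) * (2 * theta - 1) * tau) *
        (c1 * c2 * xT / (c1 + c2) ^ 2) ∧
      (theta < 1 / 2 → vinf > c1 * c2 * xT / (c1 + c2) ^ 2) ∧
      (theta > 1 / 2 → vinf < c1 * c2 * xT / (c1 + c2) ^ 2) := by
  obtain ⟨ht0, ht1⟩ := htheta
  set lam := c1 + c2 with hlam
  have hlampos : 0 < lam := by positivity
  have hD : 0 < 1 + lam * theta * tau := by positivity
  set D := 1 + lam * theta * tau with hDdef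
  set a := (1 - lam * (1 - theta) * tau) / D with ha
  set b := c2 * xT * tau / D with hb
  set L := c2 * xT / lam with hL
  have hE : 0 < 2 + lam * (2 * theta - 1) * tau := by nlinarith
  have ha1 : a < 1 := by
    rw [ha, div_lt_one hD]
    nlinarith
  have ham1 : -1 < a := by
    rw [ha, lt_div_iff₀ hD]
    nlinarith
  have haabs : |a| < 1 := abs_lt.mpr ⟨ham1, ha1⟩
  have hfix : a * L + b = L := by
    rw [ha, hb, hL]
    field_simp
    ring
  -- closed form for m
  have hmform : ∀ n, m n = a ^ n * (m 0 - L) + L := by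
    intro n
    induction n with
    | zero => simp
    | succ k ih =>
      have := hm k
      rw [this, ih]
      have : a * (a ^ k * (m 0 - L) + L) + b = a ^ (k + 1) * (m 0 - L) + L := by
        rw [pow_succ]
        nlinarith [hfix]
      linarith [this]
  have hmlim : Filter.Tendsto m Filter.atTop (nhds L) := by
    have h1 : Filter.Tendsto (fun n : ℕ => a ^ n) Filter.atTop (nhds 0) :=
      tendsto_pow_atTop_nhds_zero_of_abs_lt_one haabs
    have h2 : Filter.Tendsto (fun n : ℕ => a ^ n * (m 0 - L) + L) Filter.atTop
        (nhds (0 * (m 0 - L) + L)) := by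
      exact ((h1.mul tendsto_const_nhds).add tendsto_const_nhds)
    simp only [zero_mul, zero_add] at h2
    exact h2.congr (fun n => (hmform n).symm)
  set c := (c1 - c2) * tau / D ^ 2 with hc
  set d := c2 * xT * tau / D ^ 2 with hd
  -- take limits in the variance recurrence
  have hveq : vinf = a ^ 2 * vinf + c * L + d := by
    have h1 : Filter.Tendsto (fun n => v (n + 1)) Filter.atTop (nhds vinf) :=
      hlim.comp (Filter.tendsto_add_atTop_nat 1)
    have h2 : Filter.Tendsto (fun n => a ^ 2 * v n + c * m n + d) Filter.atTop
        (nhds (a ^ 2 * vinf + c * L + d)) := by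
      exact (((tendsto_const_nhds.mul hlim).add (tendsto_const_nhds.mul hmlim)).add
        tendsto_const_nhds)
    have h3 : (fun n => v (n + 1)) = fun n => a ^ 2 * v n + c * m n + d := by
      funext n; exact hv n
    rw [h3] at h1
    exact tendsto_nhds_unique h1 h2
  have hne : 1 - a ^ 2 ≠ 0 := by nlinarith
  have hmain : vinf = 2 / (2 + lam * (2 * theta - 1) * tau) * (c1 * c2 * xT / lam ^ 2) := by
    have hv2 : vinf * (1 - a ^ 2) = c * L + d := by nlinarith [hveq]
    have hDne : D ≠ 0 := ne_of_gt hD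
    have hlamne : lam ≠ 0 := ne_of_gt hlampos
    have hEne : (2 + lam * (2 * theta - 1) * tau) ≠ 0 := ne_of_gt hE
    have hkey : c * L + d =
        (2 / (2 + lam * (2 * theta - 1) * tau) * (c1 * c2 * xT / lam ^ 2)) * (1 - a ^ 2) := by
      rw [hc, hd, hL, ha, div_pow]
      have hD2 : D ^ 2 = 1 + 2 * (lam * theta * tau) + (lam * theta * tau) ^ 2 := by
        rw [hDdef]; ring
      field_simp
      simp only [hDdef, hlam]
      rw [eq_div_iff (by rw [hlam] at hE; nlinarith)]
      ring
    rw [hkey] at hv2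
    exact mul_right_cancel₀ hne hv2
  refine ⟨hmain, ?_, ?_⟩
  · intro hth
    rw [hmain]
    have hVar : 0 < c1 * c2 * xT / lam ^ 2 := by positivity
    have hprod : 0 < lam * tau * (1 - 2 * theta) := by
      apply mul_pos (mul_pos hlampos htau); linarith
    have hA : 1 < 2 / (2 + lam * (2 * theta - 1) * tau) := by
      rw [one_lt_div hE]; nlinarith
    nlinarith
  · intro hth
    rw [hmain]
    have hVar : 0 < c1 * c2 * xT / lam ^ 2 := by positivity
    have hprod : 0 < lam * tau * (2 * theta - 1) := by
      apply mul_pos (mul_pos hlampos htau); linarith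
    have hA : 2 / (2 + lam * (2 * theta - 1) * tau) < 1 := by
      rw [div_lt_one hE]; nlinarith
    nlinarith
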